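/- For even n ≥ 4 and m ≥ 3, the radio number of the Cartesian product P_n □ K_m of the path on n vertices and the complete graph on m vertices equals (mn² − 2n + 2)/2. -/

import Mathlib

open SimpleGraph Finset

/-- The Petersen graph as the Kneser graph K(5,2). -/
def petersen : SimpleGraph {s : Finset (Fin 5) // s.card = 2} where
  Adj a b := Disjoint a.1 b.1
  symm := ⟨fun _ _ h => h.symm⟩
  loopless := ⟨fun a h => by
    have h0 : a.1 = ⊥ := disjoint_self.mp h
    have h2 := a.2
    rw [h0] at h2
    simp at h2⟩

/-- A radio labeling of `G`: for all distinct `u, v`,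
`d(u,v) + |φ(u) - φ(v)| ≥ diam(G) + 1`. -/
def IsRadioLabeling {V : Type*} (G : SimpleGraph V) (φ : V → ℕ) : Prop :=
  ∀ u v : V, u ≠ v → (G.diam : ℤ) + 1 ≤ (G.dist u v : ℤ) + |(φ u : ℤ) - (φ v : ℤ)|

/-- The span of a labeling: the maximum difference between two labels. -/
noncomputable def span {V : Type*} (φ : V → ℕ) : ℕ :=
  sSup (Set.range fun p : V × V => φ p.1 - φ p.2)

/-- The radio number of `G`: the minimum span over all radio labelings. -/
noncomputable def radioNumber {V : Type*} (G : SimpleGraph V) : ℕ :=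
  sInf {s | ∃ φ : V → ℕ, IsRadioLabeling G φ ∧ span φ = s}

/-- `d(v, S)`: the minimum distance from `v` to a vertex of `S`. -/
noncomputable def distToSet {V : Type*} (G : SimpleGraph V) (v : V) (S : Finset V) : ℕ :=
  sInf ((fun w => G.dist v w) '' ↑S)

/-- `diam(S)`: the maximum distance in `G` between two vertices of `S`. -/
noncomputable def setDiam {V : Type*} (G : SimpleGraph V) (S : Finset V) : ℕ :=
  sSup {d | ∃ x ∈ S, ∃ y ∈ S, G.dist x y = d}


lemma abs_sub_le_walk_length {V : Type*} {G : SimpleGraph V} (f : V → ℤ)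
    (hf : ∀ {u v : V}, G.Adj u v → |f u - f v| ≤ 1) :
    ∀ {u v : V} (w : G.Walk u v), |f u - f v| ≤ (w.length : ℤ) := by
  intro u v w
  induction w with
  | nil => simp
  | @cons a b c h p ih =>
    calc |f a - f c| ≤ |f a - f b| + |f b - f c| := abs_sub_le _ _ _
    _ ≤ 1 + p.length := add_le_add (hf h) ih
    _ = ((p.length + 1 : ℕ) : ℤ) := by push_cast; ring
    _ = _ := by rw [SimpleGraph.Walk.length_cons]

lemma pathGraph_connected' {n : ℕ} (hn : 0 < n) : (pathGraph n).Connected := by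
  obtain ⟨n', rfl⟩ := Nat.exists_eq_succ_of_ne_zero hn.ne'
  exact pathGraph_connected n'

lemma pathGraph_dist_le {n : ℕ} : ∀ (d : ℕ) (i j : Fin n), i.val + d = j.val →
    (pathGraph n).dist i j ≤ d := by
  intro d
  induction d with
  | zero => intro i j h; have : i = j := Fin.ext (by omega); simp [this]
  | succ d ih =>
    intro i j h
    have hn : 0 < n := i.pos
    have hi1 : i.val + 1 < n := by have := j.isLt; omega
    set i' : Fin n := ⟨i.val + 1, hi1⟩ with hi'
    have hadj : (pathGraph n).Adj i i' := by
      rw [pathGraph_adj]; left; rfl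
    calc (pathGraph n).dist i j ≤ (pathGraph n).dist i i' + (pathGraph n).dist i' j :=
          (pathGraph_connected' hn).dist_triangle
    _ ≤ 1 + d := add_le_add (le_of_eq (dist_eq_one_iff_adj.2 hadj)) (ih i' j (by simp [hi']; omega))
    _ = d + 1 := by ring

lemma pathGraph_dist {n : ℕ} (i j : Fin n) :
    ((pathGraph n).dist i j : ℤ) = |(i.val : ℤ) - (j.val : ℤ)| := by
  have hn : 0 < n := i.pos
  apply le_antisymm
  · rcases le_total i.val j.val with h | h
    · have := pathGraph_dist_le (j.val - i.val) i j (by omega)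
      calc ((pathGraph n).dist i j : ℤ) ≤ ((j.val - i.val : ℕ) : ℤ) := by exact_mod_cast this
      _ = |(i.val : ℤ) - (j.val : ℤ)| := by
        rw [Nat.cast_sub h, abs_sub_comm, abs_of_nonneg (by push_cast; omega)]
    · have := pathGraph_dist_le (i.val - j.val) j i (by omega)
      rw [SimpleGraph.dist_comm]
      calc ((pathGraph n).dist j i : ℤ) ≤ ((i.val - j.val : ℕ) : ℤ) := by exact_mod_cast this
      _ = |(i.val : ℤ) - (j.val : ℤ)| := by
        rw [Nat.cast_sub h, abs_of_nonneg (by push_cast; omega)]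
  · obtain ⟨w, hw⟩ := ((pathGraph_connected' hn).exists_walk_length_eq_dist i j)
    have := abs_sub_le_walk_length (fun v : Fin n => (v.val : ℤ))
      (by
        intro u v h; rw [pathGraph_adj] at h
        have h2 : ((u.val : ℤ) - v.val) = 1 ∨ ((u.val : ℤ) - v.val) = -1 := by omega
        rcases h2 with h2 | h2 <;> rw [h2] <;> simp) w
    rw [hw] at this
    exact this

lemma boxProd_walk_le {α β : Type*} {G : SimpleGraph α} {H : SimpleGraph β}
    (hG : G.Connected) (hH : H.Connected) :
    ∀ {x y : α × β} (w : (G □ H).Walk x y),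
      G.dist x.1 y.1 + H.dist x.2 y.2 ≤ w.length := by
  intro x y w
  induction w with
  | nil => simp
  | @cons a b c h p ih =>
    rw [SimpleGraph.Walk.length_cons]
    rw [boxProd_adj] at h
    rcases h with ⟨h1, h2⟩ | ⟨h1, h2⟩
    · have d1 : G.dist a.1 c.1 ≤ 1 + G.dist b.1 c.1 := by
        calc G.dist a.1 c.1 ≤ G.dist a.1 b.1 + G.dist b.1 c.1 := hG.dist_triangle
        _ ≤ 1 + G.dist b.1 c.1 := by
          exact Nat.add_le_add_right (le_of_eq (dist_eq_one_iff_adj.2 h1)) _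
      have d2 : H.dist a.2 c.2 = H.dist b.2 c.2 := by rw [h2]
      omega
    · have d1 : H.dist a.2 c.2 ≤ 1 + H.dist b.2 c.2 := by
        calc H.dist a.2 c.2 ≤ H.dist a.2 b.2 + H.dist b.2 c.2 := hH.dist_triangle
        _ ≤ 1 + H.dist b.2 c.2 := by
          exact Nat.add_le_add_right (le_of_eq (dist_eq_one_iff_adj.2 h1)) _
      have d2 : G.dist a.1 c.1 = G.dist b.1 c.1 := by rw [h2]
      omega

lemma boxProd_dist {α β : Type*} {G : SimpleGraph α} {H : SimpleGraph β}
    (hG : G.Connected) (hH : H.Connected) (x y : α × β) :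
    (G □ H).dist x y = G.dist x.1 y.1 + H.dist x.2 y.2 := by
  apply le_antisymm
  · obtain ⟨w1, hw1⟩ := hG.exists_walk_length_eq_dist x.1 y.1
    obtain ⟨w2, hw2⟩ := hH.exists_walk_length_eq_dist x.2 y.2
    have := SimpleGraph.dist_le ((w1.boxProdLeft H x.2).append (w2.boxProdRight G y.1))
    rw [SimpleGraph.Walk.length_append] at this
    have e1 : (w1.boxProdLeft H x.2).length = w1.length := SimpleGraph.Walk.length_map _ _
    have e2 : (w2.boxProdRight G y.1).length = w2.length := SimpleGraph.Walk.length_map _ _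
    rw [e1, e2, hw1, hw2] at this
    exact this
  · obtain ⟨w, hw⟩ := ((hG.boxProd hH).exists_walk_length_eq_dist x y)
    have := boxProd_walk_le hG hH w
    omega


lemma top_connected' {m : ℕ} (hm : 0 < m) : (⊤ : SimpleGraph (Fin m)).Connected := by
  have : Nonempty (Fin m) := ⟨⟨0, hm⟩⟩
  constructor
  intro u v
  by_cases h : u = v
  · exact h ▸ SimpleGraph.Reachable.refl u
  · exact SimpleGraph.Adj.reachable (by simp [h])

lemma PKG_dist {n m : ℕ} (hn : 0 < n) (hm : 0 < m) (u v : Fin n × Fin m) :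
    (((pathGraph n □ (⊤ : SimpleGraph (Fin m))).dist u v : ℤ))
      = |(u.1.val : ℤ) - (v.1.val : ℤ)| + (if u.2 = v.2 then 0 else 1) := by
  rw [boxProd_dist (pathGraph_connected' hn) (top_connected' hm)]
  push_cast
  rw [pathGraph_dist]
  congr 1
  rcases eq_or_ne u.2 v.2 with h | h
  · simp [h]
  · rw [SimpleGraph.dist_top_of_ne h]; simp [h]

lemma PKG_dist_le {n m : ℕ} (hn : 0 < n) (hm : 0 < m) (u v : Fin n × Fin m) :
    (((pathGraph n □ (⊤ : SimpleGraph (Fin m))).dist u v : ℤ))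
      ≤ |(u.1.val : ℤ) - (v.1.val : ℤ)| + 1 := by
  rw [PKG_dist hn hm]
  split <;> simp

lemma PKG_diam {n m : ℕ} (hn : 2 ≤ n) (hm : 2 ≤ m) :
    (pathGraph n □ (⊤ : SimpleGraph (Fin m))).diam = n := by
  set G := pathGraph n □ (⊤ : SimpleGraph (Fin m)) with hG
  have hn0 : 0 < n := by omega
  have hm0 : 0 < m := by omega
  have hconn : G.Connected := (pathGraph_connected' hn0).boxProd (top_connected' hm0)
  have : Nonempty (Fin n × Fin m) := ⟨⟨0, hn0⟩, ⟨0, hm0⟩⟩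
  have hnetop : G.ediam ≠ ⊤ := by
    obtain ⟨u, v, huv⟩ := SimpleGraph.exists_edist_eq_ediam_of_finite (G := G)
    rw [← huv, SimpleGraph.edist_ne_top_iff_reachable]
    exact hconn.preconnected u v
  apply le_antisymm
  · obtain ⟨u, v, huv⟩ := SimpleGraph.exists_dist_eq_diam (G := G)
    rw [← huv]
    have := PKG_dist hn0 hm0 u v
    have h1 : |(u.1.val : ℤ) - (v.1.val : ℤ)| ≤ (n : ℤ) - 1 := by
      have := u.1.isLt; have := v.1.isLt
      rw [abs_le]; omega
    have h2 : ((G.dist u v : ℕ) : ℤ) ≤ n := by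
      rw [this]; split <;> omega
    exact_mod_cast h2
  · set u0 : Fin n × Fin m := (⟨0, hn0⟩, ⟨0, hm0⟩) with hu0
    set v0 : Fin n × Fin m := (⟨n-1, by omega⟩, ⟨1, hm⟩) with hv0
    have hd : G.dist u0 v0 = n := by
      have h1 := PKG_dist hn0 hm0 u0 v0
      have hne : u0.2 ≠ v0.2 := by
        simp [hu0, hv0, Fin.ext_iff]
      rw [if_neg hne] at h1
      have h3 : ((G.dist u0 v0 : ℕ) : ℤ) = n := by
        rw [hG, h1]
        have e1 : (u0.1.val) = 0 := rfl
        have e2 : (v0.1.val) = n - 1 := rfl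
        have : |((u0.1.val : ℤ)) - (v0.1.val : ℤ)| = (n : ℤ) - 1 := by
          rw [e1, e2, abs_of_nonpos (by push_cast [Nat.cast_sub hn0]; omega)]
          push_cast [Nat.cast_sub hn0]; omega
        rw [this]; ring
      exact_mod_cast h3
    calc n = G.dist u0 v0 := hd.symm
    _ ≤ G.diam := SimpleGraph.dist_le_diam hnetop


lemma sum_odd' (k : ℕ) : ∑ i ∈ Finset.range k, (2*(i:ℤ)+1) = k^2 := by
  induction k with
  | zero => simp
  | succ k ih => rw [Finset.sum_range_succ, ih]; push_cast; ring

lemma sum_levels (k : ℕ) :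
    ∑ a : Fin (2*k), |2*((a : Fin (2*k)).val:ℤ) - (2*k-1)| = 2*k^2 := by
  rw [Fin.sum_univ_eq_sum_range (fun i => |2*(i:ℤ) - (2*k-1)|) (2*k)]
  rw [Finset.range_eq_Ico, ← Finset.sum_Ico_consecutive _ (Nat.zero_le k) (by omega : k ≤ 2*k)]
  have h1 : ∑ i ∈ Finset.Ico 0 k, |2*(i:ℤ) - (2*k-1)| = k^2 := by
    rw [← Finset.range_eq_Ico]
    have : ∀ i ∈ Finset.range k, |2*(i:ℤ) - (2*k-1)| = (2*k-1) - 2*i := by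
      intro i hi; rw [Finset.mem_range] at hi
      rw [abs_of_nonpos (by push_cast; omega)]; ring
    rw [Finset.sum_congr rfl this]
    have := Finset.sum_range_reflect (fun i => (2*(k:ℤ)-1) - 2*(i:ℕ)) k
    calc ∑ i ∈ Finset.range k, ((2*(k:ℤ)-1) - 2*(i:ℕ))
        = ∑ i ∈ Finset.range k, ((2*(k:ℤ)-1) - 2*((k-1-i : ℕ):ℤ)) := this.symm
      _ = ∑ i ∈ Finset.range k, (2*(i:ℤ)+1) := by
          apply Finset.sum_congr rfl
          intro i hi; rw [Finset.mem_range] at hi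
          have : ((k-1-i : ℕ) : ℤ) = (k:ℤ)-1-i := by push_cast; omega
          rw [this]; ring
      _ = k^2 := sum_odd' k
  have h2 : ∑ i ∈ Finset.Ico k (2*k), |2*(i:ℤ) - (2*k-1)| = k^2 := by
    rw [Finset.sum_Ico_eq_sum_range]
    have : ∀ i ∈ Finset.range (2*k - k), |2*((k + i : ℕ):ℤ) - (2*k-1)| = 2*(i:ℤ)+1 := by
      intro i hi
      rw [abs_of_nonneg (by push_cast; omega)]; push_cast; ring
    rw [Finset.sum_congr rfl this, show 2*k - k = k by omega, sum_odd' k]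
  rw [h1, h2]; ring


lemma lower_bound {n m : ℕ} (hn : 4 ≤ n) (he : Even n) (hm : 3 ≤ m)
    (φ : Fin n × Fin m → ℕ)
    (hφ : IsRadioLabeling (pathGraph n □ (⊤ : SimpleGraph (Fin m))) φ) :
    (m : ℤ) * n^2 - 2*n + 2 ≤ 2 * (span φ : ℤ) := by
  obtain ⟨k, hk⟩ := he
  have hkk : n = 2 * k := by omega
  have hk2 : 2 ≤ k := by omega
  have hkz : (n:ℤ) = 2 * (k:ℤ) := by exact_mod_cast hkk
  set G := pathGraph n □ (⊤ : SimpleGraph (Fin m)) with hG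
  have hn0 : 0 < n := by omega
  have hm0 : 0 < m := by omega
  have hdiam : G.diam = n := PKG_diam (by omega) (by omega)
  have hrad : ∀ u v : Fin n × Fin m, u ≠ v →
      (n : ℤ) + 1 ≤ (G.dist u v : ℤ) + |(φ u : ℤ) - (φ v : ℤ)| := by
    intro u v huv
    have := hφ u v huv
    rwa [hdiam] at this
  have hdistle : ∀ u v : Fin n × Fin m, (G.dist u v : ℤ) ≤ |(u.1.val : ℤ) - (v.1.val : ℤ)| + 1 :=
    PKG_dist_le hn0 hm0
  have hinj : Function.Injective φ := by
    intro u v h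
    by_contra hne
    have h1 := hrad u v hne
    have h2 := hdistle u v
    have h3 : |(u.1.val : ℤ) - (v.1.val : ℤ)| ≤ (n:ℤ) - 1 := by
      have := u.1.isLt; have := v.1.isLt
      rw [abs_le]; omega
    rw [h] at h1
    simp at h1
    omega
  set N := n * m with hN
  have hN1 : 1 ≤ N := by have := Nat.mul_pos hn0 hm0; omega
  have hcard : Fintype.card (Fin n × Fin m) = N := by simp [hN]
  let v0 : Fin N ≃ (Fin n × Fin m) := (Fintype.equivFinOfCardEq hcard).symm
  let σ := Tuple.sort (fun i => φ (v0 i))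
  let eqv : Fin N ≃ (Fin n × Fin m) := σ.trans v0
  have hmono : Monotone (fun i => φ (eqv i)) := Tuple.monotone_sort (fun i => φ (v0 i))
  set E : ℕ → (Fin n × Fin m) := fun i => eqv ⟨min i (N-1), by omega⟩ with hE
  set g : ℕ → ℤ := fun i => (φ (E i) : ℤ) with hg
  have hgmono : ∀ ⦃i j : ℕ⦄, i ≤ j → g i ≤ g j := by
    intro i j hij
    have hle : (⟨min i (N-1), by omega⟩ : Fin N) ≤ ⟨min j (N-1), by omega⟩ := by
      simp [Fin.le_def]; omega
    simp only [hg, hE]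
    exact_mod_cast hmono hle
  set L : (Fin n × Fin m) → ℤ := fun v => |2*(v.1.val:ℤ) - (n-1)| with hL
  have hstep : ∀ i, i < N - 1 →
      (2*n : ℤ) - L (E i) - L (E (i+1)) ≤ 2 * (g (i+1) - g i) := by
    intro i hi
    have hne : E i ≠ E (i+1) := by
      intro h
      have h2 := eqv.injective h
      rw [Fin.mk.injEq] at h2
      omega
    have h1 := hrad (E i) (E (i+1)) hne
    have h2 := hdistle (E i) (E (i+1))
    have hmle : g i ≤ g (i+1) := hgmono (Nat.le_succ i)
    have h3 : |(φ (E i) : ℤ) - (φ (E (i+1)) : ℤ)| = g (i+1) - g i := by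
      simp only [hg] at hmle ⊢
      rw [abs_sub_comm, abs_of_nonneg (by omega)]
    rw [h3] at h1
    have h4 : 2 * |((E i).1.val : ℤ) - ((E (i+1)).1.val : ℤ)| ≤ L (E i) + L (E (i+1)) := by
      calc 2 * |((E i).1.val : ℤ) - ((E (i+1)).1.val : ℤ)|
          = |2| * |((E i).1.val : ℤ) - ((E (i+1)).1.val : ℤ)| := by norm_num
        _ = |2 * (((E i).1.val : ℤ) - ((E (i+1)).1.val : ℤ))| := (abs_mul 2 _).symm
        _ = |(2*((E i).1.val:ℤ) - ((n:ℤ)-1)) - (2*((E (i+1)).1.val:ℤ) - ((n:ℤ)-1))| := by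
            congr 1; ring
        _ ≤ |2*((E i).1.val:ℤ) - ((n:ℤ)-1)| + |2*((E (i+1)).1.val:ℤ) - ((n:ℤ)-1)| := abs_sub _ _
        _ = L (E i) + L (E (i+1)) := rfl
    omega
  have htel : ∑ i ∈ Finset.range (N-1), (2 * g (i+1) - 2 * g i) = 2 * g (N-1) - 2 * g 0 := by
    simpa using Finset.sum_range_sub (fun i => 2 * g i) (N-1)
  have hNN : ((N - 1 : ℕ) : ℤ) = (N : ℤ) - 1 := by omega
  have hsum : (2*n : ℤ) * ((N:ℤ)-1) - (∑ i ∈ Finset.range (N-1), L (E i))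
      - (∑ i ∈ Finset.range (N-1), L (E (i+1))) ≤ 2 * g (N-1) - 2 * g 0 := by
    rw [← htel]
    have hterm : ∀ i ∈ Finset.range (N-1), (2*n : ℤ) - L (E i) - L (E (i+1)) ≤ 2 * g (i+1) - 2 * g i := by
      intro i hi; rw [Finset.mem_range] at hi
      have := hstep i hi; omega
    calc (2*n : ℤ) * ((N:ℤ)-1) - (∑ i ∈ Finset.range (N-1), L (E i))
          - (∑ i ∈ Finset.range (N-1), L (E (i+1)))
        = ∑ i ∈ Finset.range (N-1), ((2*n : ℤ) - L (E i) - L (E (i+1))) := by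
          rw [Finset.sum_sub_distrib, Finset.sum_sub_distrib, Finset.sum_const,
            Finset.card_range, nsmul_eq_mul, hNN]
          ring
      _ ≤ _ := Finset.sum_le_sum hterm
  have hEi : ∀ i : Fin N, E i.val = eqv i := by
    intro i
    have hi := i.isLt
    simp only [hE]
    congr 1
    exact Fin.ext (min_eq_left (by omega))
  have hall : ∑ i ∈ Finset.range N, L (E i) = ∑ v : Fin n × Fin m, L v := by
    rw [← Fin.sum_univ_eq_sum_range (fun i => L (E i)) N]
    rw [Finset.sum_congr rfl (fun i _ => by rw [hEi i])]
    exact Equiv.sum_comp eqv L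
  have hsumall : ∑ v : Fin n × Fin m, L v = (m : ℤ) * (2*(k:ℤ)^2) := by
    calc ∑ v : Fin n × Fin m, L v
        = ∑ a : Fin n, ∑ b : Fin m, L (a, b) := Fintype.sum_prod_type L
      _ = ∑ a : Fin n, (m:ℤ) * |2*(a.val:ℤ) - ((n:ℤ)-1)| := by
          apply Finset.sum_congr rfl; intro a _
          simp only [hL]
          rw [Finset.sum_const, Finset.card_univ, Fintype.card_fin, nsmul_eq_mul]
      _ = (m:ℤ) * ∑ a : Fin n, |2*(a.val:ℤ) - ((n:ℤ)-1)| := by rw [← Finset.mul_sum]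
      _ = (m:ℤ) * (2*(k:ℤ)^2) := by
          congr 1
          subst hkk
          have := sum_levels k
          rw [← this]
          apply Finset.sum_congr rfl
          intro a _
          norm_cast
  have hsplit1 : ∑ i ∈ Finset.range (N-1), L (E i) = (∑ v : Fin n × Fin m, L v) - L (E (N-1)) := by
    have h := Finset.sum_range_succ (fun i => L (E i)) (N-1)
    rw [show N - 1 + 1 = N by omega] at h
    rw [← hall]
    beta_reduce at h
    omega
  have hsplit2 : ∑ i ∈ Finset.range (N-1), L (E (i+1)) = (∑ v : Fin n × Fin m, L v) - L (E 0) := by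
    have h := Finset.sum_range_succ' (fun i => L (E i)) (N-1)
    rw [show N - 1 + 1 = N by omega] at h
    rw [← hall]
    beta_reduce at h
    omega
  have hL1 : ∀ v : Fin n × Fin m, 1 ≤ L v := by
    intro v
    apply Int.one_le_abs
    intro h0
    omega
  have hspan : g (N-1) - g 0 ≤ (span φ : ℤ) := by
    have hle : φ (E 0) ≤ φ (E (N-1)) := by
      have := hgmono (show 0 ≤ N-1 by omega)
      simp only [hg] at this
      exact_mod_cast this
    have hmem : (φ (E (N-1)) - φ (E 0) : ℕ) ∈ Set.range
        (fun p : (Fin n × Fin m) × (Fin n × Fin m) => φ p.1 - φ p.2) :=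
      ⟨(E (N-1), E 0), rfl⟩
    have hbdd : BddAbove (Set.range
        (fun p : (Fin n × Fin m) × (Fin n × Fin m) => φ p.1 - φ p.2)) :=
      Set.Finite.bddAbove (Set.finite_range _)
    have hsup : (φ (E (N-1)) - φ (E 0) : ℕ) ≤ span φ := le_csSup hbdd hmem
    have hcast : ((φ (E (N-1)) - φ (E 0) : ℕ) : ℤ) = g (N-1) - g 0 := by
      rw [Nat.cast_sub hle]
    omega
  have hL0 := hL1 (E 0)
  have hLlast := hL1 (E (N-1))
  have hNZ : (N:ℤ) = (n:ℤ) * m := by exact_mod_cast hN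
  have harith : (m : ℤ) * n^2 - 2*n + 2 = (2*n : ℤ) * ((N:ℤ)-1) - (2 * ((m : ℤ) * (2*(k:ℤ)^2)) - 1 - 1) := by
    rw [hNZ, hkz]; ring
  rw [hsumall] at hsplit1 hsplit2
  omega


/-- level/quotient function -/
def qf (m s : ℕ) : ℕ := (s / 2) / m
def Af (k m s : ℕ) : ℕ := if s % 2 = 0 then k - 1 - qf m s else 2*k - 1 - qf m s
def Bf (m s : ℕ) : ℕ := if s % 2 = 0 then (s/2) % m else (s/2 + 2) % m
def Ff (k m s : ℕ) : ℕ := k * s - qf m s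

lemma add_div_le (m a b : ℕ) (hm : 0 < m) : (a + b) / m ≤ a / m + b := by
  calc (a + b) / m ≤ (a + b * m) / m := Nat.div_le_div_right (by nlinarith)
  _ = a / m + b := by rw [Nat.add_mul_div_right _ _ hm]

lemma qf_mono (m : ℕ) {s t : ℕ} (h : s ≤ t) : qf m s ≤ qf m t :=
  Nat.div_le_div_right (Nat.div_le_div_right h)

lemma qf_le {k m s : ℕ} (hk : 1 ≤ k) (hm : 1 ≤ m) (hs : s < 2*k*m) : qf m s ≤ k - 1 := by
  have e0 : 2*k*m = 2*(k*m) := by ring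
  have hj : s / 2 ≤ k * m - 1 := by omega
  have h1 : qf m s ≤ (k*m - 1) / m := Nat.div_le_div_right hj
  have h2 : (k*m - 1) / m = k - 1 := by
    have e1 : k * m - 1 = (m - 1) + (k-1) * m := by
      have e2 : (k-1) * m = k*m - m := by rw [Nat.sub_mul, one_mul]
      have e3 : m ≤ k * m := Nat.le_mul_of_pos_left m hk
      omega
    rw [e1, Nat.add_mul_div_right _ _ hm, Nat.div_eq_of_lt (by omega)]
    omega
  omega

lemma qf_even (m j : ℕ) : qf m (2*j) = j / m := by unfold qf; congr 1; omega
lemma qf_odd (m j : ℕ) : qf m (2*j+1) = j / m := by unfold qf; congr 1; omega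

lemma qf_short {m s w : ℕ} (hm : 3 ≤ m) (hw : w ≤ 4) : qf m (s + w) ≤ qf m s + 1 := by
  unfold qf
  have h1 : (s + w)/2 ≤ s/2 + 2 := by omega
  calc (s+w)/2/m ≤ (s/2 + 2)/m := Nat.div_le_div_right h1
  _ ≤ (s/2 + m)/m := Nat.div_le_div_right (by omega)
  _ = s/2/m + 1 := by rw [Nat.add_div_right _ (by omega)]

lemma Ff_cast {k m s : ℕ} (hk : 1 ≤ k) : ((Ff k m s : ℕ) : ℤ) = k * s - qf m s := by
  unfold Ff
  have h1 : qf m s ≤ k * s := by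
    calc qf m s ≤ s := le_trans (Nat.div_le_self _ _) (Nat.div_le_self _ _)
    _ ≤ k * s := Nat.le_mul_of_pos_left s hk
  rw [Nat.cast_sub h1]
  push_cast; ring

lemma Ff_mono {k m : ℕ} (hk : 1 ≤ k) (hm : 1 ≤ m) {s t : ℕ} (h : s ≤ t) : Ff k m s ≤ Ff k m t := by
  unfold Ff
  have h1 : qf m t ≤ qf m s + (t - s) := by
    unfold qf
    have ha : t/2 ≤ s/2 + (t - s) := by omega
    calc t/2/m ≤ (s/2 + (t-s))/m := Nat.div_le_div_right ha
    _ ≤ s/2/m + (t-s) := add_div_le _ _ _ (by omega)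
  have h2 : k * s + (t - s) ≤ k * t := by
    have e1 : k * (t - s) = k*t - k*s := Nat.mul_sub ..
    have e2 : t - s ≤ k * (t-s) := Nat.le_mul_of_pos_left _ hk
    have e3 : k * s ≤ k * t := Nat.mul_le_mul_left k h
    omega
  have h3 : qf m s ≤ k * s := by
    calc qf m s ≤ s := le_trans (Nat.div_le_self _ _) (Nat.div_le_self _ _)
    _ ≤ k * s := Nat.le_mul_of_pos_left s hk
  omega

lemma Af_even (k m j : ℕ) : Af k m (2*j) = k - 1 - j/m := by
  unfold Af; rw [if_pos (by omega), qf_even]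
lemma Af_odd (k m j : ℕ) : Af k m (2*j+1) = 2*k - 1 - j/m := by
  unfold Af; rw [if_neg (by omega), qf_odd]
lemma Bf_even (m j : ℕ) : Bf m (2*j) = j % m := by
  unfold Bf; rw [if_pos (by omega)]; congr 1; omega
lemma Bf_odd (m j : ℕ) : Bf m (2*j+1) = (j+2) % m := by
  unfold Bf; rw [if_neg (by omega)]; congr 1; omega

lemma mod_shift_ne {m j c : ℕ} (hc : 0 < c) (hcm : c < m) : (j + c) % m ≠ j % m := by
  intro h
  have h2 : j ≡ j + c [MOD m] := h.symm
  have h3 : m ∣ (j + c) - j := (Nat.modEq_iff_dvd' (by omega)).mp h2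
  rw [Nat.add_sub_cancel_left] at h3
  exact absurd (Nat.le_of_dvd hc h3) (by omega)

lemma mod_cancel {m j j' c : ℕ} (h : (j + c) % m = (j' + c) % m) : j % m = j' % m :=
  Nat.ModEq.add_right_cancel' c h

lemma div_succ_le (m j : ℕ) (hm : 1 ≤ m) : (j+1)/m ≤ j/m + 1 := by
  calc (j+1)/m ≤ (j+m)/m := Nat.div_le_div_right (by omega)
  _ = j/m + 1 := by rw [Nat.add_div_right _ (by omega)]

lemma x_inj {k m : ℕ} (hk : 2 ≤ k) (hm : 3 ≤ m) {s t : ℕ} (hs : s < 2*k*m) (ht : t < 2*k*m)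
    (hA : Af k m s = Af k m t) (hB : Bf m s = Bf m t) : s = t := by
  have hqs := qf_le (show 1 ≤ k by omega) (show 1 ≤ m by omega) hs
  have hqt := qf_le (show 1 ≤ k by omega) (show 1 ≤ m by omega) ht
  rcases Nat.even_or_odd s with hes | hos <;> rcases Nat.even_or_odd t with het | hot <;>
    [ (have hs2 : s % 2 = 0 := Nat.even_iff.mp hes; have ht2 : t % 2 = 0 := Nat.even_iff.mp het);
      (have hs2 : s % 2 = 0 := Nat.even_iff.mp hes; have ht2 : t % 2 = 1 := Nat.odd_iff.mp hot);
      (have hs2 : s % 2 = 1 := Nat.odd_iff.mp hos; have ht2 : t % 2 = 0 := Nat.even_iff.mp het);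
      (have hs2 : s % 2 = 1 := Nat.odd_iff.mp hos; have ht2 : t % 2 = 1 := Nat.odd_iff.mp hot)]
  · obtain ⟨j, rfl⟩ : ∃ j, s = 2*j := ⟨s/2, by omega⟩
    obtain ⟨j', rfl⟩ : ∃ j', t = 2*j' := ⟨t/2, by omega⟩
    rw [Af_even, Af_even] at hA
    rw [Bf_even, Bf_even] at hB
    rw [qf_even] at hqs; rw [qf_even] at hqt
    have hjj : j / m = j' / m := by omega
    have h1 := Nat.div_add_mod j m
    have h2 := Nat.div_add_mod j' m
    have h3 : m * (j/m) = m * (j'/m) := by rw [hjj]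
    omega
  · exfalso
    obtain ⟨j, rfl⟩ : ∃ j, s = 2*j := ⟨s/2, by omega⟩
    obtain ⟨j', rfl⟩ : ∃ j', t = 2*j'+1 := ⟨t/2, by omega⟩
    rw [Af_even, Af_odd] at hA
    rw [qf_even] at hqs; rw [qf_odd] at hqt
    set q1 := j / m with hq1; set q2 := j' / m with hq2
    clear_value q1 q2
    omega
  · exfalso
    obtain ⟨j, rfl⟩ : ∃ j, s = 2*j+1 := ⟨s/2, by omega⟩
    obtain ⟨j', rfl⟩ : ∃ j', t = 2*j' := ⟨t/2, by omega⟩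
    rw [Af_odd, Af_even] at hA
    rw [qf_odd] at hqs; rw [qf_even] at hqt
    set q1 := j / m with hq1; set q2 := j' / m with hq2
    clear_value q1 q2
    omega
  · obtain ⟨j, rfl⟩ : ∃ j, s = 2*j+1 := ⟨s/2, by omega⟩
    obtain ⟨j', rfl⟩ : ∃ j', t = 2*j'+1 := ⟨t/2, by omega⟩
    rw [Af_odd, Af_odd] at hA
    rw [Bf_odd, Bf_odd] at hB
    rw [qf_odd] at hqs; rw [qf_odd] at hqt
    have hjj : j / m = j' / m := by omega
    have hmm : j % m = j' % m := mod_cancel hB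
    have h1 := Nat.div_add_mod j m
    have h2 := Nat.div_add_mod j' m
    have h3 : m * (j/m) = m * (j'/m) := by rw [hjj]
    omega

lemma master {k m : ℕ} (hk : 2 ≤ k) (hm : 3 ≤ m) {s t : ℕ} (hst : s < t) (ht : t < 2*k*m) :
    (2*(k:ℤ) + 1) ≤ (|(Af k m s : ℤ) - (Af k m t : ℤ)| + (if Bf m s = Bf m t then 0 else 1))
      + ((Ff k m t : ℤ) - (Ff k m s : ℤ)) := by
  have hk1 : 1 ≤ k := by omega
  have hm1 : 1 ≤ m := by omega
  have hs : s < 2*k*m := lt_trans hst ht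
  have hqs := qf_le hk1 hm1 hs
  have hqt := qf_le hk1 hm1 ht
  rcases (by omega : t = s+1 ∨ t = s+2 ∨ t = s+3 ∨ s+4 ≤ t) with rfl | rfl | rfl | h4
  · -- consecutive
    rcases Nat.even_or_odd s with hes | hos
    · have hs2 : s % 2 = 0 := Nat.even_iff.mp hes
      obtain ⟨j, rfl⟩ : ∃ j, s = 2*j := ⟨s/2, by omega⟩
      rw [qf_even] at hqs
      rw [show 2*j+1 = 2*j+1 from rfl, qf_odd] at hqt
      set q := j/m with hq; clear_value q
      have habs : |(Af k m (2*j) : ℤ) - (Af k m (2*j+1) : ℤ)| = (k:ℤ) := by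
        have h1 : (Af k m (2*j) : ℤ) - (Af k m (2*j+1) : ℤ) = -(k:ℤ) := by
          rw [Af_even, Af_odd, ← hq]; omega
        rw [h1, abs_neg, Nat.abs_cast]
      have hB : Bf m (2*j) ≠ Bf m (2*j+1) := by
        rw [Bf_even, Bf_odd]
        exact Ne.symm (mod_shift_ne (by omega) (by omega))
      have hF : (Ff k m (2*j+1) : ℤ) - (Ff k m (2*j) : ℤ) = k := by
        rw [Ff_cast hk1, Ff_cast hk1, qf_even, qf_odd]
        push_cast
        ring
      rw [habs, if_neg hB, hF]
      omega
    · have hs2 : s % 2 = 1 := Nat.odd_iff.mp hos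
      obtain ⟨j, rfl⟩ : ∃ j, s = 2*j+1 := ⟨s/2, by omega⟩
      rw [qf_odd] at hqs
      rw [show 2*j+1+1 = 2*(j+1) from by ring, qf_even] at hqt
      have hmono : j/m ≤ (j+1)/m := Nat.div_le_div_right (by omega)
      have hstep : (j+1)/m ≤ j/m + 1 := div_succ_le m j hm1
      set q1 := j/m with hq1; set q2 := (j+1)/m with hq2; clear_value q1 q2
      have habs : |(Af k m (2*j+1) : ℤ) - (Af k m (2*(j+1)) : ℤ)|
          = (k:ℤ) + (q2:ℤ) - q1 := by
        have h1 : (Af k m (2*j+1) : ℤ) - (Af k m (2*(j+1)) : ℤ) = (k:ℤ) + q2 - q1 := by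
          rw [Af_odd, Af_even, ← hq1, ← hq2]; omega
        rw [h1, abs_of_nonneg (by omega)]
      have hB : Bf m (2*j+1) ≠ Bf m (2*(j+1)) := by
        rw [Bf_odd, show 2*(j+1) = 2*(j+1) from rfl, Bf_even]
        have := mod_shift_ne (m := m) (j := j+1) (c := 1) (by omega) (by omega)
        simpa using this
      have hF : (Ff k m (2*(j+1)) : ℤ) - (Ff k m (2*j+1) : ℤ) = (k:ℤ) - q2 + q1 := by
        rw [Ff_cast hk1, Ff_cast hk1, qf_even, qf_odd, ← hq1, ← hq2]
        push_cast
        ring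
      rw [show 2*j+1+1 = 2*(j+1) from by ring, habs, if_neg hB, hF]
      omega
  · -- distance-two
    rcases Nat.even_or_odd s with hes | hos
    · have hs2 : s % 2 = 0 := Nat.even_iff.mp hes
      obtain ⟨j, rfl⟩ : ∃ j, s = 2*j := ⟨s/2, by omega⟩
      rw [qf_even] at hqs
      rw [show 2*j+2 = 2*(j+1) from by ring, qf_even] at hqt
      have hmono : j/m ≤ (j+1)/m := Nat.div_le_div_right (by omega)
      have hstep : (j+1)/m ≤ j/m + 1 := div_succ_le m j hm1
      set q1 := j/m with hq1; set q2 := (j+1)/m with hq2; clear_value q1 q2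
      have habs : |(Af k m (2*j) : ℤ) - (Af k m (2*(j+1)) : ℤ)| = (q2:ℤ) - q1 := by
        have h1 : (Af k m (2*j) : ℤ) - (Af k m (2*(j+1)) : ℤ) = (q2:ℤ) - q1 := by
          rw [Af_even, Af_even, ← hq1, ← hq2]; omega
        rw [h1, abs_of_nonneg (by omega)]
      have hB : Bf m (2*j) ≠ Bf m (2*(j+1)) := by
        rw [Bf_even, show 2*(j+1) = 2*(j+1) from rfl, Bf_even]
        have := mod_shift_ne (m := m) (j := j) (c := 1) (by omega) (by omega)
        exact fun h => this (by simpa using h.symm)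
      have hF : (Ff k m (2*(j+1)) : ℤ) - (Ff k m (2*j) : ℤ) = 2*(k:ℤ) - q2 + q1 := by
        rw [Ff_cast hk1, Ff_cast hk1, qf_even, qf_even, ← hq1, ← hq2]
        push_cast
        ring
      rw [show 2*j+2 = 2*(j+1) from by ring, habs, if_neg hB, hF]
      omega
    · have hs2 : s % 2 = 1 := Nat.odd_iff.mp hos
      obtain ⟨j, rfl⟩ : ∃ j, s = 2*j+1 := ⟨s/2, by omega⟩
      rw [qf_odd] at hqs
      rw [show 2*j+1+2 = 2*(j+1)+1 from by ring, qf_odd] at hqt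
      have hmono : j/m ≤ (j+1)/m := Nat.div_le_div_right (by omega)
      have hstep : (j+1)/m ≤ j/m + 1 := div_succ_le m j hm1
      set q1 := j/m with hq1; set q2 := (j+1)/m with hq2; clear_value q1 q2
      have habs : |(Af k m (2*j+1) : ℤ) - (Af k m (2*(j+1)+1) : ℤ)| = (q2:ℤ) - q1 := by
        have h1 : (Af k m (2*j+1) : ℤ) - (Af k m (2*(j+1)+1) : ℤ) = (q2:ℤ) - q1 := by
          rw [Af_odd, Af_odd, ← hq1, ← hq2]; omega
        rw [h1, abs_of_nonneg (by omega)]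
      have hB : Bf m (2*j+1) ≠ Bf m (2*(j+1)+1) := by
        rw [Bf_odd, Bf_odd]
        have := mod_shift_ne (m := m) (j := j+2) (c := 1) (by omega) (by omega)
        exact fun h => this (by simpa [show j+2+1 = j+1+2 from by ring] using h.symm)
      have hF : (Ff k m (2*(j+1)+1) : ℤ) - (Ff k m (2*j+1) : ℤ) = 2*(k:ℤ) - q2 + q1 := by
        rw [Ff_cast hk1, Ff_cast hk1, qf_odd, qf_odd, ← hq1, ← hq2]
        push_cast
        ring
      rw [show 2*j+1+2 = 2*(j+1)+1 from by ring, habs, if_neg hB, hF]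
      omega
  · -- distance-three
    have hF : (Ff k m (s+3) : ℤ) - (Ff k m s : ℤ)
        = 3*(k:ℤ) - ((qf m (s+3) : ℤ) - (qf m s : ℤ)) := by
      rw [Ff_cast hk1, Ff_cast hk1]
      push_cast
      ring
    have hqm : qf m s ≤ qf m (s+3) := qf_mono m (by omega)
    have hqsh : qf m (s+3) ≤ qf m s + 1 := qf_short hm (by omega)
    have habs : (1:ℤ) ≤ |(Af k m s : ℤ) - (Af k m (s+3) : ℤ)| := by
      rcases Nat.even_or_odd s with hes | hos
      · have hs2 : s % 2 = 0 := Nat.even_iff.mp hes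
        obtain ⟨j, rfl⟩ : ∃ j, s = 2*j := ⟨s/2, by omega⟩
        rw [qf_even] at hqs
        rw [show 2*j+3 = 2*(j+1)+1 from by ring] at *
        rw [qf_odd] at hqt
        have h1 : (Af k m (2*(j+1)+1) : ℤ) - (Af k m (2*j) : ℤ) ≥ 1 := by
          rw [Af_odd, Af_even]
          set q1 := j/m with hq1; set q2 := (j+1)/m with hq2; clear_value q1 q2
          omega
        calc (1:ℤ) ≤ (Af k m (2*(j+1)+1) : ℤ) - (Af k m (2*j) : ℤ) := h1
        _ ≤ |(Af k m (2*(j+1)+1) : ℤ) - (Af k m (2*j) : ℤ)| := le_abs_self _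
        _ = |(Af k m (2*j) : ℤ) - (Af k m (2*(j+1)+1) : ℤ)| := abs_sub_comm _ _
      · have hs2 : s % 2 = 1 := Nat.odd_iff.mp hos
        obtain ⟨j, rfl⟩ : ∃ j, s = 2*j+1 := ⟨s/2, by omega⟩
        rw [qf_odd] at hqs
        rw [show 2*j+1+3 = 2*(j+2) from by ring] at *
        rw [qf_even] at hqt
        have h1 : (Af k m (2*j+1) : ℤ) - (Af k m (2*(j+2)) : ℤ) ≥ 1 := by
          rw [Af_odd, Af_even]
          set q1 := j/m with hq1; set q2 := (j+2)/m with hq2; clear_value q1 q2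
          omega
        calc (1:ℤ) ≤ (Af k m (2*j+1) : ℤ) - (Af k m (2*(j+2)) : ℤ) := h1
        _ ≤ |(Af k m (2*j+1) : ℤ) - (Af k m (2*(j+2)) : ℤ)| := le_abs_self _
    have hite : (0:ℤ) ≤ (if Bf m s = Bf m (s+3) then (0:ℤ) else 1) := by
      split <;> norm_num
    omega
  · -- distance at least four
    have hmono : Ff k m (s+4) ≤ Ff k m t := Ff_mono hk1 hm1 (by omega)
    have hF : (Ff k m (s+4) : ℤ) - (Ff k m s : ℤ)
        = 4*(k:ℤ) - ((qf m (s+4) : ℤ) - (qf m s : ℤ)) := by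
      rw [Ff_cast hk1, Ff_cast hk1]
      push_cast
      ring
    have hqm : qf m s ≤ qf m (s+4) := qf_mono m (by omega)
    have hqsh : qf m (s+4) ≤ qf m s + 1 := qf_short hm (by omega)
    have hd1 : (1:ℤ) ≤ |(Af k m s : ℤ) - (Af k m t : ℤ)|
        + (if Bf m s = Bf m t then 0 else 1) := by
      rcases eq_or_ne (Bf m s) (Bf m t) with hB | hB
      · rw [if_pos hB]
        have hA : Af k m s ≠ Af k m t := by
          intro h
          exact absurd (x_inj hk hm hs ht h hB) (by omega)
        have : (Af k m s : ℤ) - (Af k m t : ℤ) ≠ 0 := by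
          intro h
          exact hA (by exact_mod_cast sub_eq_zero.mp h)
        have := Int.one_le_abs this
        omega
      · rw [if_neg hB]
        have := abs_nonneg ((Af k m s : ℤ) - (Af k m t : ℤ))
        omega
    have hcast : (Ff k m (s+4) : ℤ) ≤ (Ff k m t : ℤ) := by exact_mod_cast hmono
    omega

lemma qf_last {k m : ℕ} (hk : 1 ≤ k) (hm : 1 ≤ m) : qf m (2*k*m - 1) = k - 1 := by
  have e0 : 2*k*m = 2*(k*m) := by ring
  have h0 : 1 ≤ k * m := Nat.one_le_iff_ne_zero.mpr (by positivity)
  have h1 : (2*k*m - 1)/2 = k*m - 1 := by omega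
  unfold qf
  rw [h1]
  have e1 : k * m - 1 = (m - 1) + (k-1) * m := by
    have e2 : (k-1) * m = k*m - m := by rw [Nat.sub_mul, one_mul]
    have e3 : m ≤ k * m := Nat.le_mul_of_pos_left m hk
    omega
  rw [e1, Nat.add_mul_div_right _ _ hm, Nat.div_eq_of_lt (by omega)]
  omega

lemma Af_lt {k m s : ℕ} (hk : 1 ≤ k) : Af k m s < 2*k := by
  unfold Af; split <;> omega

lemma Bf_lt {m s : ℕ} (hm : 1 ≤ m) : Bf m s < m := by
  unfold Bf; split <;> exact Nat.mod_lt _ (by omega)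

lemma upper_bound {n m : ℕ} (hn : 4 ≤ n) (he : Even n) (hm : 3 ≤ m) :
    ∃ φ : Fin n × Fin m → ℕ,
      IsRadioLabeling (pathGraph n □ (⊤ : SimpleGraph (Fin m))) φ ∧
        2 * span φ = m * n ^ 2 - 2 * n + 2 := by
  obtain ⟨k, hk⟩ := he
  have hkk : n = 2 * k := by omega
  have hk2 : 2 ≤ k := by omega
  have hk1 : 1 ≤ k := by omega
  have hm1 : 1 ≤ m := by omega
  have hn0 : 0 < n := by omega
  have hm0 : 0 < m := by omega
  set N := n * m with hN
  have hN2 : N = 2*k*m := by rw [hN, hkk]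
  have hN1 : 1 ≤ N := by
    have : 1 ≤ k * m := Nat.one_le_iff_ne_zero.mpr (by positivity)
    have e0 : 2*k*m = 2*(k*m) := by ring
    omega
  set xmap : Fin N → Fin n × Fin m := fun s =>
    (⟨Af k m s.val, by have := Af_lt (m := m) (s := s.val) hk1; omega⟩,
     ⟨Bf m s.val, Bf_lt hm1⟩) with hxmap
  have hxinj : Function.Injective xmap := by
    intro s t h
    rw [hxmap, Prod.mk.injEq, Fin.mk.injEq, Fin.mk.injEq] at h
    have hs := s.isLt; have ht := t.isLt
    exact Fin.ext (x_inj hk2 hm (by omega) (by omega) h.1 h.2)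
  have hxbij : Function.Bijective xmap := by
    rw [Fintype.bijective_iff_injective_and_card]
    exact ⟨hxinj, by simp [hN]⟩
  set e := Equiv.ofBijective xmap hxbij with he'
  set φ : Fin n × Fin m → ℕ := fun v => Ff k m ((e.symm v).val) with hφ
  have hφx : ∀ s : Fin N, φ (xmap s) = Ff k m s.val := by
    intro s
    have h0 : e.symm (xmap s) = s := by
      rw [show xmap s = e s from rfl, Equiv.symm_apply_apply]
    show Ff k m ((e.symm (xmap s)).val) = Ff k m s.val
    rw [h0]
  -- the key inequality, graph form
  have hkey : ∀ s t : Fin N, s.val < t.val →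
      ((n:ℤ)) + 1 ≤ ((pathGraph n □ (⊤ : SimpleGraph (Fin m))).dist (xmap s) (xmap t) : ℤ)
        + ((Ff k m t.val : ℤ) - (Ff k m s.val : ℤ)) := by
    intro s t hst
    have ht := t.isLt
    have hma := master hk2 hm hst (by omega)
    have hd := PKG_dist hn0 hm0 (xmap s) (xmap t)
    have hite : (if (xmap s).2 = (xmap t).2 then (0:ℤ) else 1)
        = (if Bf m s.val = Bf m t.val then (0:ℤ) else 1) := by
      congr 1
      rw [hxmap]
      simp [Fin.mk.injEq]
    rw [hite] at hd
    have hA1 : ((xmap s).1.val : ℤ) = (Af k m s.val : ℤ) := by rw [hxmap]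
    have hA2 : ((xmap t).1.val : ℤ) = (Af k m t.val : ℤ) := by rw [hxmap]
    rw [hA1, hA2] at hd
    rw [hd]
    have : (n:ℤ) = 2*(k:ℤ) := by exact_mod_cast hkk
    rw [this]
    omega
  refine ⟨φ, ?_, ?_⟩
  · -- is radio labeling
    intro u v huv
    rw [PKG_diam (by omega) (by omega)]
    set s := e.symm u with hs'
    set t := e.symm v with ht'
    have hu : u = xmap s := (Equiv.apply_symm_apply e u).symm
    have hv : v = xmap t := (Equiv.apply_symm_apply e v).symm
    have hst : s ≠ t := by
      intro h; apply huv; rw [hu, hv, h]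
    have hφu : (φ u : ℤ) = (Ff k m s.val : ℤ) := by rw [hu, hφx]
    have hφv : (φ v : ℤ) = (Ff k m t.val : ℤ) := by rw [hv, hφx]
    rcases lt_or_gt_of_ne hst with hlt | hgt
    · have := hkey s t (by exact_mod_cast hlt)
      have hmono : Ff k m s.val ≤ Ff k m t.val := Ff_mono hk1 hm1 (le_of_lt hlt)
      have habs : |(φ u : ℤ) - (φ v : ℤ)| = (Ff k m t.val : ℤ) - (Ff k m s.val : ℤ) := by
        rw [hφu, hφv, abs_sub_comm, abs_of_nonneg (sub_nonneg.mpr (by exact_mod_cast hmono))]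
      rw [habs, hu, hv]
      exact this
    · have := hkey t s (by exact_mod_cast hgt)
      have hmono : Ff k m t.val ≤ Ff k m s.val := Ff_mono hk1 hm1 (le_of_lt hgt)
      have habs : |(φ u : ℤ) - (φ v : ℤ)| = (Ff k m s.val : ℤ) - (Ff k m t.val : ℤ) := by
        rw [hφu, hφv, abs_of_nonneg (sub_nonneg.mpr (by exact_mod_cast hmono))]
      rw [habs, hu, hv, SimpleGraph.dist_comm]
      exact this
  · -- span computation
    set T := 2*k^2*m - 2*k + 1 with hT'
    have hFtop : Ff k m (N-1) = T := by
      unfold Ff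
      rw [hN2, qf_last hk1 hm1]
      have e2 : k*(2*k*m) = 2*(k^2*m) := by ring
      have e1 : k*(2*k*m - 1) = 2*(k^2*m) - k := by rw [Nat.mul_sub, e2, Nat.mul_one]
      have e3 : k ≤ k^2*m := by nlinarith
      have e5 : 2*k^2*m = 2*(k^2*m) := by ring
      omega
    have hφle : ∀ v : Fin n × Fin m, φ v ≤ T := by
      intro v
      rw [hφ, ← hFtop]
      exact Ff_mono hk1 hm1 (by have := (e.symm v).isLt; omega)
    have hbot : φ (xmap ⟨0, by omega⟩) = 0 := by
      rw [hφx]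
      simp [Ff, qf]
    have htop : φ (xmap ⟨N-1, by omega⟩) = T := by
      rw [hφx, hFtop]
    have hspan : span φ = T := by
      apply le_antisymm
      · apply csSup_le
        · exact ⟨φ (xmap ⟨0, by omega⟩) - φ (xmap ⟨0, by omega⟩),
            ⟨(xmap ⟨0, by omega⟩, xmap ⟨0, by omega⟩), rfl⟩⟩
        · rintro x ⟨p, rfl⟩
          calc φ p.1 - φ p.2 ≤ φ p.1 := Nat.sub_le _ _
          _ ≤ T := hφle p.1
      · have hmem : T ∈ Set.range (fun p : (Fin n × Fin m) × (Fin n × Fin m) => φ p.1 - φ p.2) := by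
          refine ⟨(xmap ⟨N-1, by omega⟩, xmap ⟨0, by omega⟩), ?_⟩
          simp only [htop, hbot]
          omega
        have hbdd : BddAbove (Set.range (fun p : (Fin n × Fin m) × (Fin n × Fin m) => φ p.1 - φ p.2)) := by
          refine ⟨T, ?_⟩
          rintro x ⟨p, rfl⟩
          calc φ p.1 - φ p.2 ≤ φ p.1 := Nat.sub_le _ _
          _ ≤ T := hφle p.1
        exact le_csSup hbdd hmem
    rw [hspan, hT']
    have e1 : m * n^2 = 4*(k^2*m) := by rw [hkk]; ring
    have e2 : 2*k^2*m = 2*(k^2*m) := by ring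
    have e3 : k ≤ k^2*m := by nlinarith
    omega

theorem stmt_11 (n m : ℕ) (hn : 4 ≤ n) (he : Even n) (hm : 3 ≤ m) :
    2 * radioNumber (pathGraph n □ (⊤ : SimpleGraph (Fin m)))
      = m * n ^ 2 - 2 * n + 2 := by
  classical
  obtain ⟨φ, hrad, hspan⟩ := upper_bound hn he hm
  have hlb : ∀ s ∈ {s | ∃ ψ : Fin n × Fin m → ℕ,
      IsRadioLabeling (pathGraph n □ (⊤ : SimpleGraph (Fin m))) ψ ∧ span ψ = s}, span φ ≤ s := by
    rintro s ⟨ψ, hψ, rfl⟩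
    have h1 := lower_bound hn he hm ψ hψ
    have hge : 2*n ≤ m*n^2 := by nlinarith
    have h3 : ((2 * span φ : ℕ) : ℤ) = ((m * n ^ 2 - 2 * n + 2 : ℕ) : ℤ) := by
      exact_mod_cast congrArg (Nat.cast : ℕ → ℤ) hspan
    have hh : ((m*n^2 : ℕ) : ℤ) = (m:ℤ) * (n:ℤ)^2 := by push_cast; ring
    omega
  have hmem : span φ ∈ {s | ∃ ψ : Fin n × Fin m → ℕ,
      IsRadioLabeling (pathGraph n □ (⊤ : SimpleGraph (Fin m))) ψ ∧ span ψ = s} := ⟨φ, hrad, rfl⟩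
  have hrn : radioNumber (pathGraph n □ (⊤ : SimpleGraph (Fin m))) = span φ := by
    unfold radioNumber
    exact le_antisymm (Nat.sInf_le hmem) (le_csInf ⟨_, hmem⟩ hlb)
  rw [hrn, hspan]
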